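/- Let k be a field, R an integral domain containing k, and E a finite field extension of k such that S := R ⊗_k E is a Bézout domain. Then every finitely generated S-module M which is free as an R-module is free as an S-module. -/

import Mathlib

open TensorProduct

universe u v

/-- A finitely generated module over a Bézout domain which embeds in `Fin n → S`
is free. -/
theorem aux_free_of_inj {S : Type v} [CommRing S] [IsDomain S] [IsBezout S] :
    ∀ (n : ℕ) (M : Type u) [AddCommGroup M] [Module S M] [Module.Finite S M]
      (f : M →ₗ[S] (Fin n → S)), Function.Injective f → Module.Free S M := by
  intro n
  induction n with
  | zero =>
    intro M _ _ _ f hf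
    have : Subsingleton M := ⟨fun a b => hf (Subsingleton.elim _ _)⟩
    infer_instance
  | succ n ih =>
    intro M _ _ _ f hf
    classical
    set φ : M →ₗ[S] S := (LinearMap.proj (0 : Fin (n + 1))).comp f with hφdef
    set I : Ideal S := LinearMap.range φ with hIdef
    have hIfg : I.FG := by
      rw [hIdef, LinearMap.range_eq_map]
      exact Submodule.FG.map φ (Module.Finite.fg_top)
    haveI hIp : I.IsPrincipal := IsBezout.isPrincipal_of_FG I hIfg
    -- tail map
    let t : (Fin (n + 1) → S) →ₗ[S] (Fin n → S) := LinearMap.funLeft S S Fin.succ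
    by_cases ha : Submodule.IsPrincipal.generator I = 0
    · -- the ideal is zero, so `f` lands in the "tail" coordinates
      have hI : I = ⊥ := (Submodule.IsPrincipal.eq_bot_iff_generator_eq_zero I).mpr ha
      have hφ0 : ∀ x : M, φ x = 0 := by
        intro x
        have : φ x ∈ I := LinearMap.mem_range_self φ x
        rw [hI] at this
        simpa using this
      apply ih M (t.comp f)
      intro x y hxy
      apply hf
      funext i
      refine Fin.cases ?_ ?_ i
      · show f x 0 = f y 0
        have hx : f x 0 = φ x := rfl
        have hy : f y 0 = φ y := rfl
        rw [hx, hy, hφ0, hφ0]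
      · intro j
        exact congrFun hxy j
    · -- the ideal is nonzero: split off a free rank-one quotient
      set a := Submodule.IsPrincipal.generator I with hadef
      have hI : Submodule.span S {a} = I := Submodule.IsPrincipal.span_singleton_generator I
      let e : S ≃ₗ[S] (Submodule.span S ({a} : Set S)) :=
        LinearEquiv.toSpanNonzeroSingleton S S a ha
      let φ' : M →ₗ[S] S :=
        (e.symm.toLinearMap.comp
          (LinearEquiv.ofEq I (Submodule.span S {a}) hI.symm).toLinearMap).comp φ.rangeRestrict
      have hφ'ker : ∀ x : M, φ' x = 0 → φ x = 0 := by
        intro x hx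
        have h1 : e.symm ((LinearEquiv.ofEq I (Submodule.span S {a}) hI.symm)
            (φ.rangeRestrict x)) = 0 := hx
        have h2 := congrArg e h1
        rw [LinearEquiv.apply_symm_apply, map_zero] at h2
        have h3 : φ.rangeRestrict x = 0 := (LinearEquiv.map_eq_zero_iff _).mp h2
        have h4 : (φ.rangeRestrict x : S) = 0 := by rw [h3]; rfl
        simpa using h4
      have hφ's : Function.Surjective φ' := by
        intro y
        obtain ⟨x, hx⟩ := φ.surjective_rangeRestrict
          ((LinearEquiv.ofEq I (Submodule.span S {a}) hI.symm).symm (e y))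
        refine ⟨x, ?_⟩
        show e.symm ((LinearEquiv.ofEq I (Submodule.span S {a}) hI.symm)
          (φ.rangeRestrict x)) = y
        rw [hx, LinearEquiv.apply_symm_apply, LinearEquiv.symm_apply_apply]
      obtain ⟨m, hm⟩ := hφ's 1
      -- `M ≃ ker φ' × S`
      let eq1 : M ≃ₗ[S] (LinearMap.ker φ') × S :=
        { toFun := fun x => (⟨x - φ' x • m, by
            simp [LinearMap.mem_ker, map_sub, map_smul, hm, smul_eq_mul]⟩, φ' x)
          invFun := fun p => (p.1 : M) + p.2 • m
          left_inv := fun x => by simp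
          right_inv := fun p => by
            obtain ⟨⟨x, hx⟩, s⟩ := p
            rw [LinearMap.mem_ker] at hx
            ext
            · simp [hx, hm, smul_eq_mul]
            · simp [hx, hm, smul_eq_mul]
          map_add' := fun x y => by
            ext
            · simp [add_smul]; abel
            · simp
          map_smul' := fun s x => by
            ext
            · simp [smul_smul, smul_sub]
            · simp }
      haveI : Module.Finite S (LinearMap.ker φ') :=
        Module.Finite.of_surjective ((LinearMap.fst S _ S).comp eq1.toLinearMap)
          (by
            intro y
            refine ⟨eq1.symm (y, 0), ?_⟩
            have h5 : eq1 (eq1.symm (y, 0)) = (y, 0) := eq1.apply_symm_apply _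
            show (eq1 (eq1.symm (y, 0))).1 = y
            rw [h5])
      have hker : Module.Free S (LinearMap.ker φ') := by
        apply ih (LinearMap.ker φ') ((t.comp f).comp (LinearMap.ker φ').subtype)
        intro x y hxy
        apply Subtype.ext
        apply hf
        funext i
        refine Fin.cases ?_ ?_ i
        · show f (x : M) 0 = f (y : M) 0
          have hx : f (x : M) 0 = φ (x : M) := rfl
          have hy : f (y : M) 0 = φ (y : M) := rfl
          rw [hx, hy, hφ'ker _ x.2, hφ'ker _ y.2]
        · intro j
          exact congrFun hxy j
      exact Module.Free.of_equiv eq1.symm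
 
/-- A finitely generated torsion-free module over a Bézout domain is free. -/
theorem aux_bezout_free {S : Type v} (M : Type u) [CommRing S] [IsDomain S] [IsBezout S]
    [AddCommGroup M] [Module S M] [Module.Finite S M] [NoZeroSMulDivisors S M] :
    Module.Free S M := by
  classical
  obtain ⟨nn, s, hs⟩ := Module.Finite.exists_fin (R := S) (M := M)
  have hex := exists_maximal_linearIndepOn S s
  obtain ⟨I, indepI, hI⟩ := hex
  haveI : Fintype I := Fintype.ofFinite I
  set N := Submodule.span S (Set.range fun i : I => s i) with hN
  let sI_basis : Module.Basis I S N := Module.Basis.span indepI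
  have exists_a : ∀ i, ∃ a : S, a ≠ 0 ∧ a • s i ∈ N := by
    intro i
    by_cases hi : i ∈ I
    · exact ⟨1, one_ne_zero, by
        rw [one_smul]; exact Submodule.subset_span (Set.mem_range_self (⟨i, hi⟩ : I))⟩
    · obtain ⟨a, ha, ha'⟩ := hI i hi
      refine ⟨a, ha, ?_⟩
      have : s '' I = Set.range fun i : I => s i := by
        rw [Set.image_eq_range]
      rwa [this] at ha'
  choose a ha ha' using exists_a
  let A := ∏ i, a i
  have hA : A ≠ 0 := by
    rw [Finset.prod_ne_zero_iff]
    simpa using ha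
  have hmem : ∀ x : M, A • x ∈ N := by
    have key : ∀ i, A • s i ∈ N := by
      intro i
      calc
        (∏ j ∈ {i}ᶜ, a j) • a i • s i ∈ N := N.smul_mem _ (ha' i)
        _ = (∏ j, a j) • s i := by rw [Fintype.prod_eq_prod_compl_mul i, mul_smul]
    intro x
    have hx : x ∈ Submodule.span S (Set.range s) := by rw [hs]; trivial
    refine Submodule.span_induction ?_ ?_ ?_ ?_ hx
    · rintro _ ⟨i, rfl⟩; exact key i
    · simp
    · intro y z _ _ hy hz
      rw [smul_add]; exact N.add_mem hy hz
    · intro c y _ hy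
      rw [smul_comm]; exact N.smul_mem c hy
  let h : M →ₗ[S] N := (LinearMap.lsmul S M A).codRestrict N hmem
  have hinj : Function.Injective h := by
    intro x y hxy
    have : A • x = A • y := congrArg Subtype.val hxy
    exact smul_right_injective M hA this
  let e1 : N ≃ₗ[S] (I →₀ S) := sI_basis.repr
  let e2 : (I →₀ S) ≃ₗ[S] (I → S) := Finsupp.linearEquivFunOnFinite S S I
  let e3 : (I → S) ≃ₗ[S] (Fin (Fintype.card I) → S) :=
    LinearEquiv.funCongrLeft S S (Fintype.equivFin I).symm
  exact aux_free_of_inj (Fintype.card I) M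
    ((e3.toLinearMap.comp (e2.toLinearMap.comp e1.toLinearMap)).comp h)
    (by
      intro x y hxy
      exact hinj (e1.injective (e2.injective (e3.injective hxy))))

/-- Let `R` be a domain over a field `k` and `E` a finite field extension of `k` such
that `R ⊗[k] E` is a Bézout domain. Then every finitely generated `R ⊗[k] E`-module
which is free as an `R`-module is free as an `R ⊗[k] E`-module. -/
theorem free_over_tensor_of_free_over_base
    (k R E M : Type*) [Field k] [CommRing R] [IsDomain R] [Algebra k R]
    [Field E] [Algebra k E] [FiniteDimensional k E]
    [IsDomain (R ⊗[k] E)] [IsBezout (R ⊗[k] E)]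
    [AddCommGroup M] [Module (R ⊗[k] E) M] [Module.Finite (R ⊗[k] E) M]
    [Module R M] [IsScalarTower R (R ⊗[k] E) M] [Module.Free R M] :
    Module.Free (R ⊗[k] E) M := by
  haveI : Module.Finite R (R ⊗[k] E) := Module.Finite.base_change k R E
  haveI : Algebra.IsIntegral R (R ⊗[k] E) := Algebra.IsIntegral.of_finite R (R ⊗[k] E)
  haveI : NoZeroSMulDivisors (R ⊗[k] E) M := by
    refine ⟨fun {s} {m} hsm => ?_⟩
    by_cases hs : s = 0
    · exact Or.inl hs
    · right
      have halg : IsAlgebraic R s := (Algebra.IsIntegral.isIntegral s).isAlgebraic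
      obtain ⟨r, hr, d, hd⟩ :=
        halg.exists_nonzero_dvd (mem_nonZeroDivisors_iff_ne_zero.mpr hs)
      have : r • m = 0 := by
        rw [← algebraMap_smul (R ⊗[k] E) r m, hd, mul_comm, mul_smul, hsm, smul_zero]
      rcases (smul_eq_zero.mp this) with h | h
      · exact absurd h hr
      · exact h
  exact aux_bezout_free M
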